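/- For every fixed real number a > 0, the function x ↦ L(a,x) is strictly concave on (0,∞). -/

import Mathlib

/-- The logarithmic mean of two positive reals. -/
noncomputable def logMean (a b : ℝ) : ℝ :=
  if a = b then a else (b - a) / (Real.log b - Real.log a)

/-- The identric mean of two positive reals. -/
noncomputable def idMean (a b : ℝ) : ℝ :=
  if a = b then a else Real.exp (-1) * (b ^ b / a ^ a) ^ (b - a)⁻¹

/-- The weighted arithmetic mean `a ∇_v b`. -/
def wArith (v a b : ℝ) : ℝ := (1 - v) * a + v * b

/-- The weighted geometric mean `a ♯_v b`. -/
noncomputable def wGeom (v a b : ℝ) : ℝ := a ^ (1 - v) * b ^ v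

/-- The weighted harmonic mean `a !_v b`. -/
noncomputable def wHarm (v a b : ℝ) : ℝ := ((1 - v) / a + v / b)⁻¹

/-- The weighted logarithmic mean `L_v(a,b)` (for `a ≠ b`, `v ∈ (0,1)`). -/
noncomputable def wLog (v a b : ℝ) : ℝ :=
  (1 / (Real.log a - Real.log b)) *
    (((1 - v) / v) * (a - a ^ (1 - v) * b ^ v) + (v / (1 - v)) * (a ^ (1 - v) * b ^ v - b))

/-- The weighted identric mean `I_v(a,b)` (for `a ≠ b`, `v ∈ (0,1)`). -/
noncomputable def wId (v a b : ℝ) : ℝ :=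
  Real.exp (-1) * wArith v a b ^ ((1 - 2 * v) * wArith v a b / (v * (1 - v) * (b - a))) *
    (b ^ (v * b / (1 - v)) / a ^ ((1 - v) * a / v)) ^ (b - a)⁻¹

open Real MeasureTheory intervalIntegral

private lemma cont_rpow {b : ℝ} (hb : 0 < b) : Continuous fun t : ℝ => b ^ t := by
  have : (fun t : ℝ => b ^ t) = fun t => Real.exp (Real.log b * t) := by
    funext t; rw [Real.rpow_def_of_pos hb]
  rw [this]; exact Real.continuous_exp.comp (continuous_const.mul continuous_id)

private lemma logMean_eq_integral {a x : ℝ} (ha : 0 < a) (hx : 0 < x) :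
    logMean a x = ∫ t in (0:ℝ)..1, a ^ (1 - t) * x ^ t := by
  have hpt : ∀ t : ℝ, a ^ (1 - t) * x ^ t
      = Real.exp ((1 - t) * Real.log a + t * Real.log x) := by
    intro t
    rw [Real.rpow_def_of_pos ha, Real.rpow_def_of_pos hx, ← Real.exp_add,
      mul_comm (Real.log a), mul_comm (Real.log x)]
  by_cases h : a = x
  · subst h
    have : ∀ t : ℝ, a ^ (1 - t) * a ^ t = a := by
      intro t
      rw [← Real.rpow_add ha]; norm_num
    simp only [logMean, if_pos rfl, this]
    simp
  · have hc : Real.log x - Real.log a ≠ 0 := by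
      intro hc
      exact h (Real.log_injOn_pos (Set.mem_Ioi.2 ha) (Set.mem_Ioi.2 hx)
        (by linarith))
    set c := Real.log x - Real.log a with hcdef
    have hder : ∀ t ∈ Set.uIcc (0:ℝ) 1,
        HasDerivAt (fun t => Real.exp ((1 - t) * Real.log a + t * Real.log x) / c)
          (Real.exp ((1 - t) * Real.log a + t * Real.log x)) t := by
      intro t _
      have h1 : HasDerivAt (fun t : ℝ => (1 - t) * Real.log a + t * Real.log x)
          (-Real.log a + Real.log x) t := by
        have := (((hasDerivAt_id t).const_sub 1).mul_const (Real.log a)).add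
          ((hasDerivAt_id t).mul_const (Real.log x))
        exact this.congr_deriv (by ring)
      have h2 := (h1.exp).div_const c
      have : Real.exp ((1 - t) * Real.log a + t * Real.log x) * (-Real.log a + Real.log x) / c
          = Real.exp ((1 - t) * Real.log a + t * Real.log x) := by
        rw [show -Real.log a + Real.log x = c by rw [hcdef]; ring, mul_div_assoc,
          div_self hc, mul_one]
      rwa [this] at h2
    have hint : IntervalIntegrable
        (fun t => Real.exp ((1 - t) * Real.log a + t * Real.log x)) volume 0 1 := by
      apply Continuous.intervalIntegrable
      exact Real.continuous_exp.comp (by continuity)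
    have key := intervalIntegral.integral_eq_sub_of_hasDerivAt hder hint
    have : (∫ t in (0:ℝ)..1, a ^ (1 - t) * x ^ t)
        = ∫ t in (0:ℝ)..1, Real.exp ((1 - t) * Real.log a + t * Real.log x) := by
      apply intervalIntegral.integral_congr
      intro t _; exact hpt t
    rw [this, key, logMean, if_neg h]
    rw [show ((1:ℝ) - 1) * Real.log a + 1 * Real.log x = Real.log x by ring,
      show ((1:ℝ) - 0) * Real.log a + 0 * Real.log x = Real.log a by ring,
      Real.exp_log hx, Real.exp_log ha, div_sub_div_same]


/-- For fixed `a > 0`, the map `x ↦ L(a,x)` is strictly concave on `(0,∞)`. -/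
theorem strictConcaveOn_logMean (a : ℝ) (ha : 0 < a) :
    StrictConcaveOn ℝ (Set.Ioi (0 : ℝ)) (fun x => logMean a x) := by
  refine ⟨convex_Ioi 0, fun x hx y hy hxy p q hp hq hpq => ?_⟩
  simp only [smul_eq_mul] at *
  have hx0 : 0 < x := hx
  have hy0 : 0 < y := hy
  have hz0 : 0 < p * x + q * y := by positivity
  rw [logMean_eq_integral ha hx0, logMean_eq_integral ha hy0, logMean_eq_integral ha hz0]
  have hix : IntervalIntegrable (fun t => p * (a ^ (1 - t) * x ^ t)) volume 0 1 := by
    apply Continuous.intervalIntegrable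
    exact continuous_const.mul (((cont_rpow ha).comp (by continuity)).mul (cont_rpow hx0))
  have hiy : IntervalIntegrable (fun t => q * (a ^ (1 - t) * y ^ t)) volume 0 1 := by
    apply Continuous.intervalIntegrable
    exact continuous_const.mul (((cont_rpow ha).comp (by continuity)).mul (cont_rpow hy0))
  rw [← intervalIntegral.integral_const_mul, ← intervalIntegral.integral_const_mul,
    ← intervalIntegral.integral_add hix hiy]
  apply intervalIntegral.integral_lt_integral_of_continuousOn_of_le_of_exists_lt
    (by norm_num : (0:ℝ) < 1)
  · apply Continuous.continuousOn
    exact (continuous_const.mul (((cont_rpow ha).comp (by continuity)).mul (cont_rpow hx0))).add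
      (continuous_const.mul (((cont_rpow ha).comp (by continuity)).mul (cont_rpow hy0)))
  · apply Continuous.continuousOn
    exact ((cont_rpow ha).comp (by continuity)).mul (cont_rpow hz0)
  · intro t ht
    have h1 : p * x ^ t + q * y ^ t ≤ (p * x + q * y) ^ t := by
      have := (Real.concaveOn_rpow ht.1.le ht.2).2 (Set.mem_Ici.2 hx0.le)
        (Set.mem_Ici.2 hy0.le) hp.le hq.le hpq
      simpa using this
    have ha' : 0 < a ^ (1 - t) := Real.rpow_pos_of_pos ha _
    calc p * (a ^ (1 - t) * x ^ t) + q * (a ^ (1 - t) * y ^ t)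
        = a ^ (1 - t) * (p * x ^ t + q * y ^ t) := by ring
      _ ≤ a ^ (1 - t) * (p * x + q * y) ^ t := by
          exact mul_le_mul_of_nonneg_left h1 ha'.le
  · refine ⟨1/2, ⟨by norm_num, by norm_num⟩, ?_⟩
    have h1 : p * x ^ (1/2:ℝ) + q * y ^ (1/2:ℝ) < (p * x + q * y) ^ (1/2:ℝ) := by
      have := (Real.strictConcaveOn_rpow (by norm_num : (0:ℝ) < 1/2)
        (by norm_num : (1:ℝ)/2 < 1)).2 (Set.mem_Ici.2 hx0.le)
        (Set.mem_Ici.2 hy0.le) hxy hp hq hpq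
      simpa using this
    have ha' : 0 < a ^ (1 - (1/2:ℝ)) := Real.rpow_pos_of_pos ha _
    calc p * (a ^ (1 - (1/2:ℝ)) * x ^ (1/2:ℝ)) + q * (a ^ (1 - (1/2:ℝ)) * y ^ (1/2:ℝ))
        = a ^ (1 - (1/2:ℝ)) * (p * x ^ (1/2:ℝ) + q * y ^ (1/2:ℝ)) := by ring
      _ < a ^ (1 - (1/2:ℝ)) * (p * x + q * y) ^ (1/2:ℝ) := by
          exact (mul_lt_mul_iff_right₀ ha').2 h1
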